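/- Let V be a nonempty countable set and b : P(V) → [0,∞] satisfy conditions (0), (1) symmetry, (2) submodularity, (3) monotone-continuity, and (4) finiteness of λ_b. If X is an optimal s-t cut, then X has a ≺_X-minimal element, and for every ≺_X-minimal element s' of X, X is an optimal s'-t cut, i.e. b(X) = λ_b(s', t). -/

import Mathlib

open Set Filter Topology ENNReal

noncomputable section

/-- `λ_b(u,v)`: the infimum of `b(X)` over all `u-v` cuts `X`
(sets with `u ∈ X` and `v ∉ X`). -/
def lamB {V : Type*} (b : Set V → ℝ≥0∞) (u v : V) : ℝ≥0∞ :=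
  ⨅ (X : Set V) (_ : u ∈ X ∧ v ∉ X), b X

/-- `X` is an optimal `u-v` cut: a `u-v` cut with `b(X) = λ_b(u,v)`. -/
def IsOptCut {V : Type*} (b : Set V → ℝ≥0∞) (u v : V) (X : Set V) : Prop :=
  u ∈ X ∧ v ∉ X ∧ b X = lamB b u v

section Infra

variable {V : Type*} {b : Set V → ℝ≥0∞}

lemma lamB_le {u v : V} {Y : Set V} (hu : u ∈ Y) (hv : v ∉ Y) : lamB b u v ≤ b Y :=
  iInf_le_of_le Y (iInf_le _ ⟨hu, hv⟩)

lemma le_lamB {u v : V} {c : ℝ≥0∞} (h : ∀ Y : Set V, u ∈ Y → v ∉ Y → c ≤ b Y) :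
    c ≤ lamB b u v :=
  le_iInf fun Y => le_iInf fun hY => h Y hY.1 hY.2

lemma lamB_comm (h1 : ∀ X : Set V, b Xᶜ = b X) (u v : V) : lamB b u v = lamB b v u := by
  have key : ∀ x y : V, lamB b x y ≤ lamB b y x := by
    intro x y
    refine le_lamB fun Y hy hx => ?_
    have := lamB_le (b := b) (u := x) (v := y) (Y := Yᶜ) hx (by simp [hy])
    simpa [h1 Y] using this
  exact le_antisymm (key u v) (key v u)

lemma lamB_triangle (u v w : V) : min (lamB b u v) (lamB b v w) ≤ lamB b u w := by
  refine le_lamB fun Y hu hw => ?_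
  by_cases hv : v ∈ Y
  · exact le_trans (min_le_right _ _) (lamB_le hv hw)
  · exact le_trans (min_le_left _ _) (lamB_le hu hv)

lemma tight2 {a c p q : ℝ≥0∞} (ha : a ≠ ⊤) (hc : c ≠ ⊤) (hp : a ≤ p) (hq : c ≤ q)
    (hsum : p + q ≤ a + c) : p = a ∧ q = c := by
  constructor
  · refine le_antisymm ?_ hp
    have h2 : p + c ≤ a + c := le_trans (add_le_add_right hq p) hsum
    exact (ENNReal.add_le_add_iff_right hc).mp h2
  · refine le_antisymm ?_ hq
    have h2 : a + q ≤ a + c := le_trans (add_le_add_left hp q) hsum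
    exact (ENNReal.add_le_add_iff_left ha).mp h2

variable (hco : ∀ Y : Set V, b Yᶜ = b Y)
variable (hsm : ∀ Y Z : Set V, b (Y ∩ Z) + b (Y ∪ Z) ≤ b Y + b Z)

include hco hsm in
lemma symdiff_ineq (G H : Set V) : b (G \ H) + b (H \ G) ≤ b G + b H := by
  have key := hsm G Hᶜ
  rw [hco H] at key
  have e2 : b (G ∪ Hᶜ) = b (H \ G) := by
    rw [← hco (G ∪ Hᶜ)]
    congr 1
    rw [compl_union, compl_compl]
    exact inter_comm _ _
  rwa [e2] at key

end Infra

section Ramsey0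

/-- Infinite Ramsey theorem for pairs with finitely many colors. -/
theorem ramsey_pairs {σ : Type*} [Finite σ] [Nonempty σ] (r : ℕ → ℕ → σ) :
    ∃ k : ℕ → ℕ, StrictMono k ∧ ∃ c : σ, ∀ i j : ℕ, i < j → r (k i) (k j) = c := by
  -- step function
  have step : ∀ S : Set ℕ, S.Infinite →
      ∃ (a : ℕ) (c : σ) (T : Set ℕ), T.Infinite ∧ T ⊆ S ∧ a ∈ S ∧
        ∀ m ∈ T, a < m ∧ r a m = c := by
    intro S hS
    obtain ⟨a, ha⟩ := hS.nonempty
    have hT : (S \ Iic a).Infinite := hS.diff (finite_Iic a)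
    have hcol : ∃ c : σ, ((S \ Iic a) ∩ {m | r a m = c}).Infinite := by
      by_contra hc
      push_neg at hc
      have : (S \ Iic a) ⊆ ⋃ c : σ, ((S \ Iic a) ∩ {m | r a m = c}) := by
        intro m hm
        exact mem_iUnion.mpr ⟨r a m, hm, rfl⟩
      exact hT ((Set.finite_iUnion hc).subset this)
    obtain ⟨c, hc⟩ := hcol
    refine ⟨a, c, _, hc, (inter_subset_left.trans diff_subset), ha, ?_⟩
    rintro m ⟨⟨-, hm2⟩, hm3⟩
    exact ⟨by simpa using hm2, hm3⟩
  -- build the sequence by recursion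
  choose f g h hInf hSub hMem hProp using step
  let St : ℕ → {S : Set ℕ // S.Infinite} := fun n =>
    Nat.rec ⟨Set.univ, infinite_univ⟩ (fun _ p => ⟨h p.1 p.2, hInf p.1 p.2⟩) n
  set a : ℕ → ℕ := fun n => f (St n).1 (St n).2 with ha_def
  set col : ℕ → σ := fun n => g (St n).1 (St n).2 with hcol_def
  have hStSucc : ∀ n, (St (n+1)).1 = h (St n).1 (St n).2 := fun n => rfl
  have hSub' : ∀ n, (St (n+1)).1 ⊆ (St n).1 := fun n => hSub (St n).1 (St n).2
  have hMono : ∀ {m n : ℕ}, m ≤ n → (St n).1 ⊆ (St m).1 := by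
    intro m n hmn
    induction n with
    | zero => interval_cases m; exact fun _ h => h
    | succ k ih =>
      rcases Nat.lt_or_ge m (k+1) with h' | h'
      · exact (hSub' k).trans (ih (Nat.lt_succ_iff.mp h'))
      · have : m = k + 1 := le_antisymm hmn h'
        subst this; exact fun _ h => h
  have haMem : ∀ n, a n ∈ (St n).1 := fun n => hMem (St n).1 (St n).2
  have haProp : ∀ n, ∀ m ∈ (St (n+1)).1, a n < m ∧ r (a n) m = col n := by
    intro n m hm
    exact hProp (St n).1 (St n).2 m hm
  have haStrict : StrictMono a := by
    apply strictMono_nat_of_lt_succ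
    intro n
    exact (haProp n _ (haMem (n+1))).1
  have hpair : ∀ i j, i < j → r (a i) (a j) = col i := by
    intro i j hij
    have : a j ∈ (St (i+1)).1 := hMono hij (haMem j)
    exact (haProp i _ this).2
  -- pigeonhole on col
  have hcol2 : ∃ c : σ, {n | col n = c}.Infinite := by
    by_contra hc
    push_neg at hc
    have : (Set.univ : Set ℕ) ⊆ ⋃ c : σ, {n | col n = c} := by
      intro n _
      exact mem_iUnion.mpr ⟨col n, rfl⟩
    exact infinite_univ ((Set.finite_iUnion hc).subset this)
  obtain ⟨c, hc⟩ := hcol2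
  refine ⟨fun i => a (Nat.nth (fun n => col n = c) i), ?_, c, ?_⟩
  · exact haStrict.comp (Nat.nth_strictMono (by exact hc))
  · intro i j hij
    have hnth : Nat.nth (fun n => col n = c) i < Nat.nth (fun n => col n = c) j := by
      exact Nat.nth_strictMono (by exact hc) hij
    rw [hpair _ _ hnth]
    exact Nat.nth_mem_of_infinite (by exact hc) i

end Ramsey0


section Engines

variable {V : Type*} {b : Set V → ℝ≥0∞} {t : V} {β : ℝ≥0∞}

variable (h3a : ∀ X : ℕ → Set V, Antitone X →
      Filter.Tendsto (fun n => b (X n)) Filter.atTop (nhds (b (⋂ n, X n))))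
variable (hV0 : b (∅ : Set V) = 0) (hβ : 0 < β)

include h3a hV0 hβ in
/-- kill engine, antitone version -/
lemma killAnti (R : ℕ → Set V) (hanti : Antitone R) (hEmpty : (⋂ n, R n) = ∅)
    (wit : ℕ → V) (hwit : ∀ N, wit N ∈ R N) (ht : ∀ N, t ∉ R N)
    (hlam : ∀ N, β ≤ lamB b (wit N) t) : False := by
  have hlow : ∀ N, β ≤ b (R N) := fun N => le_trans (hlam N) (lamB_le (hwit N) (ht N))
  have htend := h3a R hanti
  rw [hEmpty, hV0] at htend
  have : β ≤ 0 := le_of_tendsto_of_tendsto' tendsto_const_nhds htend hlow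
  exact absurd hβ (by simpa using this)

include h3a hV0 hβ in
/-- kill engine, tails version: a family where each point belongs to at most one set -/
lemma killTails (B : ℕ → Set V) (wit : ℕ → V)
    (hwit : ∀ N, wit N ∈ B N) (ht : ∀ N, t ∉ B N)
    (hlam : ∀ N, β ≤ lamB b (wit N) t)
    (hdisj : ∀ y N M, N < M → y ∈ B N → y ∉ B M) : False := by
  refine killAnti h3a hV0 hβ (fun N => ⋃ M ∈ Set.Ici N, B M) ?_ ?_ wit ?_ ?_ hlam
  · intro N M h
    exact Set.biUnion_subset_biUnion_left (fun k hk => le_trans h hk)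
  · ext y
    simp only [Set.mem_iInter, Set.mem_empty_iff_false, iff_false]
    intro hmem
    obtain ⟨M1, _, hy1⟩ := Set.mem_iUnion₂.mp (hmem 0)
    obtain ⟨M2, hM2, hy2⟩ := Set.mem_iUnion₂.mp (hmem (M1+1))
    exact hdisj y M1 M2 (lt_of_lt_of_le (Nat.lt_succ_self M1) hM2) hy1 hy2
  · intro N
    exact Set.mem_biUnion (Set.mem_Ici.mpr le_rfl) (hwit N)
  · intro N hmem
    obtain ⟨M, -, hyM⟩ := Set.mem_iUnion₂.mp hmem
    exact ht M hyM

end Engines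

section Context

variable {V : Type*} {b : Set V → ℝ≥0∞} {Xm : V → V → Set V} {s t : V} {X : Set V}

variable (hco : ∀ Y : Set V, b Yᶜ = b Y)
variable (hsm : ∀ Y Z : Set V, b (Y ∩ Z) + b (Y ∪ Z) ≤ b Y + b Z)
variable (hXm : ∀ u v : V, u ≠ v → IsLeast {Y : Set V | IsOptCut b u v Y} (Xm u v))
variable (hfin : ∀ u v : V, u ≠ v → lamB b u v ≠ ⊤)
variable (hX : IsOptCut b s t X)

include hXm hfin hsm hX in
/-- L1: if `t ∉ Xm u v` for `u v ∈ X`, then `Xm u v ⊆ X`. -/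
lemma L1 {u v : V} (hu : u ∈ X) (hv : v ∈ X) (huv : u ≠ v) (ht : t ∉ Xm u v) :
    Xm u v ⊆ X := by
  obtain ⟨hsX, htX, hbX⟩ := hX
  have hst : s ≠ t := fun h => htX (h ▸ hsX)
  obtain ⟨⟨huA, hvA, hbA⟩, hleast⟩ := hXm u v huv
  have key := hsm (Xm u v) X
  have l1 : lamB b u v ≤ b (Xm u v ∩ X) := lamB_le ⟨huA, hu⟩ (fun h => hvA h.1)
  have l2 : lamB b s t ≤ b (Xm u v ∪ X) := lamB_le (Or.inr hsX) (fun h => h.elim ht htX)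
  rw [hbA, hbX] at key
  have heq := (tight2 (hfin u v huv) (hfin s t hst) l1 l2 key).1
  have h5 : Xm u v ⊆ Xm u v ∩ X :=
    hleast (show IsOptCut b u v (Xm u v ∩ X) from ⟨⟨huA, hu⟩, fun h => hvA h.1, heq⟩)
  exact h5.trans inter_subset_right

include hco hsm hXm hfin in
/-- antisymmetry: `t` can't be in both least optimal cuts of a pair. -/
lemma antisym {u v : V} (huv : u ≠ v) (htA : t ∈ Xm u v) (htB : t ∈ Xm v u) : False := by
  obtain ⟨⟨huA, hvA, hbA⟩, hleastA⟩ := hXm u v huv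
  obtain ⟨⟨hvB, huB, hbB⟩, -⟩ := hXm v u huv.symm
  have key := symdiff_ineq hco hsm (Xm u v) (Xm v u)
  rw [hbA, hbB, ← lamB_comm hco u v] at key
  have l1 : lamB b u v ≤ b (Xm u v \ Xm v u) := lamB_le ⟨huA, huB⟩ (fun h => hvA h.1)
  have l2 : lamB b u v ≤ b (Xm v u \ Xm u v) := by
    rw [lamB_comm hco u v]
    exact lamB_le ⟨hvB, hvA⟩ (fun h => huB h.1)
  have heq := (tight2 (hfin u v huv) (hfin u v huv) l1 l2 key).1
  have h5 : Xm u v ⊆ Xm u v \ Xm v u :=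
    hleastA (show IsOptCut b u v _ from ⟨⟨huA, huB⟩, fun h => hvA h.1, heq⟩)
  exact (h5 htA).2 htB

include hco hsm hXm hfin in
/-- monotonicity of connectivity to `t` along `≺`. -/
lemma ell_mono {u w : V} (hwu : w ≠ u) (htw : t ≠ w) (htu : t ≠ u)
    (hmem : t ∈ Xm w u) : lamB b t u ≤ lamB b t w := by
  obtain ⟨⟨htD, hwD, hbD⟩, -⟩ := hXm t w htw
  obtain ⟨⟨hwA, huA, hbA⟩, -⟩ := hXm w u hwu
  by_cases huD : u ∈ Xm t w
  · have key := symdiff_ineq hco hsm (Xm t w) (Xm w u)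
    rw [hbD, hbA] at key
    have l1 : lamB b u t ≤ b (Xm t w \ Xm w u) :=
      lamB_le ⟨huD, huA⟩ (fun h => h.2 hmem)
    have l2 : lamB b w u ≤ b (Xm w u \ Xm t w) :=
      lamB_le ⟨hwA, hwD⟩ (fun h => huA h.1)
    have key2 : lamB b u t + lamB b w u ≤ lamB b t w + lamB b w u :=
      le_trans (add_le_add l1 l2) key
    rw [lamB_comm hco t u]
    exact (ENNReal.add_le_add_iff_right (hfin w u hwu)).mp key2
  · have := lamB_le (b := b) htD huD
    rwa [hbD] at this

include hco hsm hXm hfin in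
/-- W1: strict. pairs `(p',p)` and `(q',q)` with `t` in both least cuts;
if `p ∈ Xm q' q` but `p' ∉ Xm q' q` then `λ(p',p) < λ(q',q)`. -/
lemma W1 {p p' q q' : V} (hp : p' ≠ p) (hq : q' ≠ q)
    (hA : t ∈ Xm p' p) (hB : t ∈ Xm q' q)
    (hpB : p ∈ Xm q' q) (hp'B : p' ∉ Xm q' q) :
    lamB b p' p < lamB b q' q := by
  obtain ⟨⟨hp'A, hpA, hbA⟩, hleastA⟩ := hXm p' p hp
  obtain ⟨⟨hq'B, hqB, hbB⟩, -⟩ := hXm q' q hq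
  have key := symdiff_ineq hco hsm (Xm q' q) (Xm p' p)
  rw [hbA, hbB] at key
  have l1 : lamB b p' p ≤ b (Xm q' q \ Xm p' p) := by
    rw [lamB_comm hco p' p]
    exact lamB_le ⟨hpB, hpA⟩ (fun h => h.2 hp'A)
  have l2 : lamB b p' p ≤ b (Xm p' p \ Xm q' q) := lamB_le ⟨hp'A, hp'B⟩ (fun h => hpA h.1)
  have hle : lamB b p' p ≤ lamB b q' q := by
    have key2 : lamB b p' p + lamB b p' p ≤ lamB b q' q + lamB b p' p :=
      le_trans (add_le_add l1 l2) key
    exact (ENNReal.add_le_add_iff_right (hfin p' p hp)).mp key2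
  rcases lt_or_eq_of_le hle with h | h
  · exact h
  · exfalso
    rw [← h] at key
    have heq := (tight2 (hfin p' p hp) (hfin p' p hp) l1 l2 key).2
    have h5 : Xm p' p ⊆ Xm p' p \ Xm q' q :=
      hleastA (show IsOptCut b p' p _ from ⟨⟨hp'A, hp'B⟩, fun hh => hpA hh.1, heq⟩)
    exact (h5 hA).2 hB

include hsm hXm hfin in
/-- dual W1: if `p ∉ Xm q' q` but `p' ∈ Xm q' q` then `λ(p',p) ≤ λ(q',q)`,
with equality forcing `Xm p' p ⊆ Xm q' q`. -/
lemma dualW1 {p p' q q' : V} (hp : p' ≠ p) (hq : q' ≠ q)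
    (hpB : p ∉ Xm q' q) (hp'B : p' ∈ Xm q' q) :
    lamB b p' p ≤ lamB b q' q ∧
      (lamB b p' p = lamB b q' q → Xm p' p ⊆ Xm q' q) := by
  obtain ⟨⟨hp'A, hpA, hbA⟩, hleastA⟩ := hXm p' p hp
  obtain ⟨⟨hq'B, hqB, hbB⟩, -⟩ := hXm q' q hq
  have key := hsm (Xm p' p) (Xm q' q)
  rw [hbA, hbB] at key
  have l1 : lamB b p' p ≤ b (Xm p' p ∩ Xm q' q) := lamB_le ⟨hp'A, hp'B⟩ (fun h => hpA h.1)
  have l2 : lamB b p' p ≤ b (Xm p' p ∪ Xm q' q) :=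
    lamB_le (Or.inl hp'A) (fun h => h.elim hpA hpB)
  constructor
  · have key2 : lamB b p' p + lamB b p' p ≤ lamB b p' p + lamB b q' q :=
      le_trans (add_le_add l1 l2) key
    exact (ENNReal.add_le_add_iff_left (hfin p' p hp)).mp key2
  · intro heqv
    rw [← heqv] at key
    have heq := (tight2 (hfin p' p hp) (hfin p' p hp) l1 l2 key).1
    have h5 : Xm p' p ⊆ Xm p' p ∩ Xm q' q :=
      hleastA (show IsOptCut b p' p _ from ⟨⟨hp'A, hp'B⟩, fun h => hpA h.1, heq⟩)
    exact h5.trans inter_subset_right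

include hco hXm in
/-- the two least cuts of a pair (in both orientations) are disjoint -/
lemma AK_disjoint {p q : V} (hpq : p ≠ q) : Xm p q ∩ Xm q p = ∅ := by
  obtain ⟨⟨hpA, hqA, hbA⟩, hleastA⟩ := hXm p q hpq
  obtain ⟨⟨hqK, hpK, hbK⟩, -⟩ := hXm q p hpq.symm
  have hopt : IsOptCut b p q (Xm q p)ᶜ := by
    refine ⟨hpK, fun h => h hqK, ?_⟩
    rw [hco, hbK, lamB_comm hco q p]
  have h5 : Xm p q ⊆ (Xm q p)ᶜ := hleastA hopt
  ext y
  simp only [mem_inter_iff, mem_empty_iff_false, iff_false, not_and]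
  exact fun hy hy2 => h5 hy hy2

include hco hsm hXm hfin in
/-- transitivity of `≺` (in the `t ∈ Xm` characterization) -/
lemma trans_t {u v w : V} (hv : v ∈ X) (huv : u ≠ v) (hvw : v ≠ w) (huw : u ≠ w)
    (htA : t ∈ Xm u v) (htB : t ∈ Xm v w) : t ∈ Xm u w := by
  obtain ⟨⟨huA, hvA, hbA⟩, hleastA⟩ := hXm u v huv
  obtain ⟨⟨hvB, hwB, hbB⟩, hleastB⟩ := hXm v w hvw
  obtain ⟨⟨huC, hwC, hbC⟩, hleastC⟩ := hXm u w huw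
  by_contra htC
  by_cases hvC : v ∈ Xm u w
  · -- v ∈ C : uncross C with B
    have key := hsm (Xm u w) (Xm v w)
    rw [hbC, hbB] at key
    have l1 : lamB b v w ≤ b (Xm u w ∩ Xm v w) := lamB_le ⟨hvC, hvB⟩ (fun h => hwC h.1)
    have l2 : lamB b u w ≤ b (Xm u w ∪ Xm v w) :=
      lamB_le (Or.inl huC) (fun h => h.elim hwC hwB)
    rw [add_comm (lamB b u w)] at key
    have heq := (tight2 (hfin v w hvw) (hfin u w huw) l1 l2 key).1
    have h5 : Xm v w ⊆ Xm u w ∩ Xm v w :=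
      hleastB (show IsOptCut b v w _ from ⟨⟨hvC, hvB⟩, fun h => hwC h.1, heq⟩)
    exact htC ((h5 htB).1)
  · -- v ∉ C
    by_cases hle : lamB b u w ≤ lamB b u v
    · have hlam1 : lamB b u v ≤ b (Xm u w) := lamB_le huC hvC
      have hbC2 : b (Xm u w) = lamB b u v := le_antisymm (hbC ▸ hle) hlam1
      have h5 : Xm u v ⊆ Xm u w :=
        hleastA (show IsOptCut b u v _ from ⟨huC, hvC, hbC2⟩)
      exact htC (h5 htA)
    · push_neg at hle
      have hwA : w ∈ Xm u v := by
        by_contra hwA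
        have h6 : lamB b u w ≤ b (Xm u v) := lamB_le huA hwA
        rw [hbA] at h6
        exact absurd h6 (not_le.mpr hle)
      by_cases huB : u ∈ Xm v w
      · -- λuw ≤ λvw ≤ λuv < λuw
        have e1 : lamB b u w ≤ lamB b v w := by
          have := lamB_le (b := b) huB hwB
          rwa [hbB] at this
        have key := symdiff_ineq hco hsm (Xm u v) (Xm v w)
        rw [hbA, hbB] at key
        have l1 : lamB b v w ≤ b (Xm u v \ Xm v w) := by
          rw [lamB_comm hco v w]
          exact lamB_le ⟨hwA, hwB⟩ (fun h => hvA h.1)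
        have l2 : lamB b v w ≤ b (Xm v w \ Xm u v) :=
          lamB_le ⟨hvB, hvA⟩ (fun h => h.2 hwA)
        have key2 : lamB b v w + lamB b v w ≤ lamB b u v + lamB b v w :=
          le_trans (add_le_add l1 l2) key
        have e2 : lamB b v w ≤ lamB b u v :=
          (ENNReal.add_le_add_iff_right (hfin v w hvw)).mp key2
        exact absurd (le_trans e1 e2) (not_le.mpr hle)
      · -- u ∉ B
        have key := symdiff_ineq hco hsm (Xm u v) (Xm v w)
        rw [hbA, hbB] at key
        have l1 : lamB b w v ≤ b (Xm u v \ Xm v w) :=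
          lamB_le ⟨hwA, hwB⟩ (fun h => hvA h.1)
        have l2 : lamB b v u ≤ b (Xm v w \ Xm u v) :=
          lamB_le ⟨hvB, hvA⟩ (fun h => h.2 huA)
        have l3 : lamB b v w ≤ b (Xm v w \ Xm u v) :=
          lamB_le ⟨hvB, hvA⟩ (fun h => hwB h.1)
        have hrw : lamB b u v + lamB b v w = lamB b w v + lamB b v u := by
          rw [lamB_comm hco w v, lamB_comm hco v u, add_comm]
        rw [hrw] at key
        have hfinwv : lamB b w v ≠ ⊤ := by
          rw [lamB_comm hco w v]; exact hfin v w hvw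
        have hfinvu : lamB b v u ≠ ⊤ := by
          rw [lamB_comm hco v u]; exact hfin u v huv
        obtain ⟨e1, e2⟩ := tight2 hfinwv hfinvu l1 l2 key
        -- from l3 and e2 : λvw ≤ λvu
        have e3 : lamB b v w ≤ lamB b u v := by
          rw [← lamB_comm hco v u]
          exact e2 ▸ l3
        -- triangle : λuv ≤ λvw
        have e4 : lamB b u v ≤ lamB b v w := by
          have htr := lamB_triangle (b := b) v u w
          rw [lamB_comm hco v u] at htr
          rwa [min_eq_left (le_of_lt hle)] at htr
        have e5 : lamB b v w = lamB b u v := le_antisymm e3 e4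
        have e6 : b (Xm u v \ Xm v w) = lamB b u v := by
          rw [e1, lamB_comm hco w v, e5]
        have h5 : Xm u v ⊆ Xm u v \ Xm v w :=
          hleastA (show IsOptCut b u v _ from ⟨⟨huA, huB⟩, fun h => hvA h.1, e6⟩)
        exact (h5 htA).2 htB

include hco hXm in
/-- Part 2 core: for every `≺_X`-minimal `s'` in `X`, `X` is an optimal `s'-t` cut. -/
lemma part2 (hXopt : IsOptCut b s t X) :
    ∀ s' ∈ X, (∀ u ∈ X, ¬ (u ≠ s' ∧ ¬ Xm u s' ⊆ X)) → IsOptCut b s' t X := by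
  intro s' hs' hmin
  by_cases hss : s = s'
  · exact hss ▸ hXopt
  obtain ⟨hsX, htX, hbX⟩ := hXopt
  have hsub : Xm s s' ⊆ X := by
    have := hmin s hsX
    push_neg at this
    exact this hss
  obtain ⟨⟨hsW, hs'W, hbW⟩, -⟩ := hXm s s' hss
  have htW : t ∉ Xm s s' := fun h => htX (hsub h)
  have h1' : lamB b s t ≤ lamB b s s' := hbW ▸ lamB_le hsW htW
  have h2' : lamB b s t ≤ lamB b s' t := by
    refine le_trans (le_min ?_ le_rfl) (lamB_triangle s' s t)
    rw [lamB_comm hco s' s]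
    exact h1'
  have h3' : lamB b s' t ≤ b X := lamB_le hs' htX
  refine ⟨hs', htX, le_antisymm ?_ ?_⟩
  · rw [hbX]; exact h2'
  · exact h3'

end Context
section Main

open Set Filter

variable {V : Type*} [Countable V]

theorem part1 (b : Set V → ℝ≥0∞)
    (h0 : ∀ Y : Set V, b Y = 0 ↔ Y = ∅ ∨ Y = Set.univ)
    (hco : ∀ Y : Set V, b Yᶜ = b Y)
    (hsm : ∀ Y Z : Set V, b (Y ∩ Z) + b (Y ∪ Z) ≤ b Y + b Z)
    (h3a : ∀ Y : ℕ → Set V, Antitone Y →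
      Filter.Tendsto (fun n => b (Y n)) Filter.atTop (nhds (b (⋂ n, Y n))))
    (h4 : ∀ u v : V, u ≠ v → lamB b u v < ⊤)
    (Xm : V → V → Set V)
    (hXm : ∀ u v : V, u ≠ v → IsLeast {Y : Set V | IsOptCut b u v Y} (Xm u v))
    (s t : V) (X : Set V) (hX : IsOptCut b s t X) :
    ∃ s' ∈ X, ∀ u ∈ X, ¬ (u ≠ s' ∧ ¬ Xm u s' ⊆ X) := by
  classical
  by_contra hmin
  push_neg at hmin
  -- hmin : ∀ s' ∈ X, ∃ u ∈ X, u ≠ s' ∧ ¬ Xm u s' ⊆ X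
  have hXfull : IsOptCut b s t X := hX
  obtain ⟨hsX, htX, hbX⟩ := hX
  have hfin : ∀ u v : V, u ≠ v → lamB b u v ≠ ⊤ := fun u v h => (h4 u v h).ne
  -- β and positivity
  set β : ℝ≥0∞ := lamB b s t with hβdef
  have hβpos : 0 < β := by
    rcases eq_or_ne β 0 with h | h
    · exfalso
      have hbX0 : b X = 0 := by rw [hbX, h]
      rcases (h0 X).mp hbX0 with h' | h'
      · rw [h'] at hsX; exact hsX
      · rw [h'] at htX; exact htX (Set.mem_univ t)
    · exact pos_iff_ne_zero.mpr h
  have hV0 : b (∅ : Set V) = 0 := (h0 ∅).mpr (Or.inl rfl)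
  -- encoding
  obtain ⟨enc, henc⟩ : ∃ f : V → ℕ, Function.Injective f :=
    countable_iff_exists_injective V |>.mp ‹Countable V›
  -- greedy successor
  have hPex : ∀ v, v ∈ X → ∃ n : ℕ, ∃ u, (u ∈ X ∧ u ≠ v ∧ ¬ Xm u v ⊆ X) ∧ enc u = n := by
    intro v hv
    obtain ⟨u, huX, hu2, hu3⟩ := hmin v hv
    exact ⟨enc u, u, ⟨huX, hu2, hu3⟩, rfl⟩
  let nxt : ∀ v, v ∈ X → V := fun v hv => (Nat.find_spec (hPex v hv)).choose
  have hnxt : ∀ v hv, ((nxt v hv) ∈ X ∧ (nxt v hv) ≠ v ∧ ¬ Xm (nxt v hv) v ⊆ X) ∧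
      enc (nxt v hv) = Nat.find (hPex v hv) :=
    fun v hv => (Nat.find_spec (hPex v hv)).choose_spec
  have hnxtmin : ∀ v hv u, u ∈ X → u ≠ v → ¬ Xm u v ⊆ X → enc (nxt v hv) ≤ enc u := by
    intro v hv u hu1 hu2 hu3
    rw [(hnxt v hv).2]
    exact Nat.find_le ⟨u, ⟨hu1, hu2, hu3⟩, rfl⟩
  -- the chain
  obtain ⟨x, hx0, hxX, hneq, hnsub, hgreedy⟩ :
      ∃ x : ℕ → V, x 0 = s ∧ (∀ n, x n ∈ X) ∧ (∀ n, x (n+1) ≠ x n) ∧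
        (∀ n, ¬ Xm (x (n+1)) (x n) ⊆ X) ∧
        (∀ n u, u ∈ X → u ≠ x n → ¬ Xm u (x n) ⊆ X → enc (x (n+1)) ≤ enc u) := by
    let xs : ℕ → {v : V // v ∈ X} := fun n =>
      Nat.rec ⟨s, hsX⟩ (fun _ p => ⟨nxt p.1 p.2, ((hnxt p.1 p.2).1).1⟩) n
    refine ⟨fun n => (xs n).1, rfl, fun n => (xs n).2,
      fun n => ((hnxt (xs n).1 (xs n).2).1).2.1,
      fun n => ((hnxt (xs n).1 (xs n).2).1).2.2,
      fun n u h1 h2 h3 => hnxtmin (xs n).1 (xs n).2 u h1 h2 h3⟩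
  -- t belongs to each consecutive least cut
  have htA : ∀ n, t ∈ Xm (x (n+1)) (x n) := by
    intro n
    by_contra h
    exact hnsub n (L1 hsm hXm hfin hXfull (hxX (n+1)) (hxX n) (hneq n) h)
  -- chain transitivity and distinctness
  have hchain : ∀ n m, n < m → x m ≠ x n ∧ t ∈ Xm (x m) (x n) := by
    intro n m hnm
    induction m, hnm using Nat.le_induction with
    | base => exact ⟨hneq n, htA n⟩
    | succ m hm ih =>
      by_cases heq : x (m+1) = x n
      · exfalso
        have h1 : t ∈ Xm (x m) (x (m+1)) := by rw [heq]; exact ih.2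
        exact antisym hco hsm hXm hfin (hneq m) (htA m) h1
      · exact ⟨heq, trans_t hco hsm hXm hfin (hxX m) (hneq m) ih.1 heq (htA m) ih.2⟩
  have hinj : Function.Injective x := by
    intro a b hab
    rcases lt_trichotomy a b with h | h | h
    · exact absurd (hab.symm) (hchain a b h).1
    · exact h
    · exact absurd hab (hchain b a h).1
  -- connectivity to t from below
  have htne : ∀ n, t ≠ x n := fun n h => htX (h ▸ hxX n)
  have hell : ∀ n, β ≤ lamB b (x n) t := by
    have aux : ∀ n, β ≤ lamB b t (x n) := by
      intro n
      induction n with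
      | zero =>
        rw [hx0, lamB_comm hco t s]
      | succ n ih =>
        refine le_trans ih ?_
        exact ell_mono hco hsm hXm hfin (hneq n) (htne (n+1)) (htne n) (htA n)
    intro n
    rw [lamB_comm hco (x n) t]
    exact aux n
  -- Ramsey
  obtain ⟨k0, hk0, c, hhom⟩ := ramsey_pairs
    (fun m n => decide (x n ∈ Xm (x (m+1)) (x m)))
  set k : ℕ → ℕ := fun i => k0 (2*i) with hkdef
  have hkmono : StrictMono k := by
    intro i j h
    simp only [hkdef]
    exact hk0 (by omega)
  have hkgap : ∀ i j, i < j → k i + 1 < k j := by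
    intro i j h
    have h1 : k0 (2*i) < k0 (2*i+1) := hk0 (by omega)
    have h2 : k0 (2*i+1) < k0 (2*j) := hk0 (by omega)
    simp only [hkdef]
    omega
  have hkhom : ∀ i j, i < j →
      decide (x (k j) ∈ Xm (x (k i + 1)) (x (k i))) = c := by
    intro i j h
    exact hhom (2*i) (2*j) (by omega)
  rcases c with _ | _
  · -- c = false : for i < j, x (k j) ∉ Xm (x (k i + 1)) (x (k i)); greedy contradiction
    have PA : ∀ i j, i < j → x (k j) ∉ Xm (x (k i + 1)) (x (k i)) := by
      intro i j h
      exact of_decide_eq_false (hkhom i j h)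
    -- key : t ∈ Xm (x (k 0 + 1)) (x (k j)) for all j ≥ 1
    have key : ∀ j, 0 < j → t ∈ Xm (x (k 0 + 1)) (x (k j)) := by
      intro j hj
      have hidx : k 0 + 1 < k j := hkgap 0 j hj
      have hwzj : x (k 0 + 1) ≠ x (k j) := fun h => (by omega : k 0 + 1 ≠ k j) (hinj h)
      have hwzi : x (k 0 + 1) ≠ x (k 0) := hneq (k 0)
      obtain ⟨⟨hwP, hzjP, hbP⟩, -⟩ := hXm (x (k 0 + 1)) (x (k j)) hwzj
      obtain ⟨⟨hwA, hziA, hbA⟩, hleastA⟩ := hXm (x (k 0 + 1)) (x (k 0)) hwzi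
      have keyu := hsm (Xm (x (k 0 + 1)) (x (k j))) (Xm (x (k 0 + 1)) (x (k 0)))
      rw [hbP, hbA] at keyu
      have l1 : lamB b (x (k 0 + 1)) (x (k 0)) ≤
          b (Xm (x (k 0 + 1)) (x (k j)) ∩ Xm (x (k 0 + 1)) (x (k 0))) :=
        lamB_le ⟨hwP, hwA⟩ (fun h => hziA h.2)
      have l2 : lamB b (x (k 0 + 1)) (x (k j)) ≤
          b (Xm (x (k 0 + 1)) (x (k j)) ∪ Xm (x (k 0 + 1)) (x (k 0))) :=
        lamB_le (Or.inl hwP) (fun h => h.elim hzjP (PA 0 j hj))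
      rw [add_comm (lamB b (x (k 0 + 1)) (x (k j)))] at keyu
      have heq := (tight2 (hfin _ _ hwzi) (hfin _ _ hwzj) l1 l2 keyu).1
      have h5 : Xm (x (k 0 + 1)) (x (k 0)) ⊆
          Xm (x (k 0 + 1)) (x (k j)) ∩ Xm (x (k 0 + 1)) (x (k 0)) :=
        hleastA (show IsOptCut b (x (k 0 + 1)) (x (k 0)) _ from
          ⟨⟨hwP, hwA⟩, fun h => hziA h.2, heq⟩)
      exact (h5 (htA (k 0))).1
    -- greedy contradiction
    have hbound : ∀ j, 0 < j → enc (x (k j + 1)) ≤ enc (x (k 0 + 1)) := by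
      intro j hj
      refine hgreedy (k j) (x (k 0 + 1)) (hxX (k 0 + 1)) ?_ ?_
      · exact fun h => (by have := hkgap 0 j hj; omega : k 0 + 1 ≠ k j) (hinj h)
      · intro hsub
        exact htX (hsub (key j hj))
    have hginj : Function.Injective (fun j : ℕ => x (k (j+1) + 1)) := by
      intro a b hab
      have hab' : x (k (a+1) + 1) = x (k (b+1) + 1) := hab
      have := hinj hab'
      have h2 : k (a+1) = k (b+1) := by omega
      have := hkmono.injective h2
      omega
    have hrange : Set.range (fun j : ℕ => x (k (j+1) + 1)) ⊆
        enc ⁻¹' (Set.Iic (enc (x (k 0 + 1)))) := by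
      rintro y ⟨j, rfl⟩
      exact hbound (j+1) (Nat.succ_pos j)
    have hF : (enc ⁻¹' (Set.Iic (enc (x (k 0 + 1))))).Finite :=
      Set.Finite.preimage henc.injOn (Set.finite_Iic _)
    exact Set.infinite_range_of_injective hginj (hF.subset hrange)
  · -- c = true : KILL-A
    have PA : ∀ i j, i < j → x (k j) ∈ Xm (x (k i + 1)) (x (k i)) := by
      intro i j h
      exact of_decide_eq_true (hkhom i j h)
    set A' : ℕ → Set V := fun i => Xm (x (k i + 1)) (x (k i)) with hA'
    refine killTails (t := t) (β := β) h3a hV0 hβpos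
      (fun N => (⋂ i ∈ Finset.range N, A' i) \ A' N)
      (fun N => x (k N)) ?_ ?_ ?_ ?_
    · intro N
      refine ⟨?_, (hXm (x (k N + 1)) (x (k N)) (hneq (k N))).1.2.1⟩
      exact Set.mem_iInter₂.mpr (fun i hi => PA i N (Finset.mem_range.mp hi))
    · intro N h
      exact h.2 (htA (k N))
    · intro N
      exact hell (k N)
    · intro y N M hNM hyN hyM
      exact hyN.2 (Set.mem_iInter₂.mp hyM.1 N (Finset.mem_range.mpr hNM))

end Main

/-- Every optimal `s-t` cut `X` has a `≺_X`-minimal element, and for every `≺_X`-minimal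
element `s'` of `X`, `X` is an optimal `s'-t` cut. Here `u ≺_X v` means
`u ≠ v ∧ ¬ X_{u,v} ⊆ X`, with `X_{u,v}` the `⊆`-smallest optimal `u-v` cut. -/
theorem exists_minimal_and_realizes {V : Type*} [Countable V] [Nonempty V]
    (b : Set V → ℝ≥0∞)
    (h0 : ∀ X : Set V, b X = 0 ↔ X = ∅ ∨ X = Set.univ)
    (h1 : ∀ X : Set V, b Xᶜ = b X)
    (h2 : ∀ X Y : Set V, b (X ∩ Y) + b (X ∪ Y) ≤ b X + b Y)
    (h3m : ∀ X : ℕ → Set V, Monotone X →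
      Filter.Tendsto (fun n => b (X n)) Filter.atTop (nhds (b (⋃ n, X n))))
    (h3a : ∀ X : ℕ → Set V, Antitone X →
      Filter.Tendsto (fun n => b (X n)) Filter.atTop (nhds (b (⋂ n, X n))))
    (h4 : ∀ u v : V, u ≠ v → lamB b u v < ⊤)
    (Xm : V → V → Set V)
    (hXm : ∀ u v : V, u ≠ v → IsLeast {Y : Set V | IsOptCut b u v Y} (Xm u v))
    (s t : V) (hst : s ≠ t) (X : Set V) (hX : IsOptCut b s t X) :
    (∃ s' ∈ X, ∀ u ∈ X, ¬ (u ≠ s' ∧ ¬ Xm u s' ⊆ X)) ∧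
    (∀ s' ∈ X, (∀ u ∈ X, ¬ (u ≠ s' ∧ ¬ Xm u s' ⊆ X)) → IsOptCut b s' t X) :=
  ⟨part1 b h0 h1 h2 h3a h4 Xm hXm s t X hX, part2 h1 hXm hX⟩
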